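/- The error in the Lagrange multiplier satisfies, in terms of the energy dual norm of the first residual, ‖p - p_N‖_Y ≤ (2/β̃)·‖r¹‖_{X',a} + (1/β̃²)·‖r²‖_{Y'}, where ‖v‖_{X,a} = √(a(v,v)) is the energy norm and ‖r¹‖_{X',a} = sup_{v ≠ 0} r¹(v)/‖v‖_{X,a}. -/

import Mathlib

def ESyn15 (X : Type*) : Type _ := X
instance {X : Type*} [h : AddCommGroup X] : AddCommGroup (ESyn15 X) := h
instance {X : Type*} [AddCommGroup X] [h : Module ℝ X] : Module ℝ (ESyn15 X) := h
def toE15 {X : Type*} [AddCommGroup X] [Module ℝ X] : X ≃ₗ[ℝ] ESyn15 X := LinearEquiv.refl ℝ X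

lemma supNonneg15 {X : Type*} [AddCommGroup X] (F D : X → ℝ)
    (hF : ∀ v, F (-v) = -F v) (hD : ∀ v, D (-v) = D v)
    (hbdd : BddAbove (Set.range fun v : {v : X // v ≠ 0} => F v.1 / D v.1)) :
    0 ≤ ⨆ v : {v : X // v ≠ 0}, F v.1 / D v.1 := by
  rcases subsingleton_or_nontrivial X with h | h
  · haveI : IsEmpty {v : X // v ≠ 0} := ⟨fun v => v.2 (Subsingleton.elim _ _)⟩
    rw [Real.iSup_of_isEmpty]
  · obtain ⟨v, hv⟩ := exists_ne (0 : X)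
    have h1 := le_ciSup hbdd ⟨v, hv⟩
    have h2 := le_ciSup hbdd ⟨-v, neg_ne_zero.mpr hv⟩
    simp only at h1 h2
    rw [hF, hD, neg_div] at h2
    linarith

set_option maxHeartbeats 1000000 in
theorem stmt15
  {X Y : Type*} [NormedAddCommGroup X] [InnerProductSpace ℝ X] [FiniteDimensional ℝ X]
  [NormedAddCommGroup Y] [InnerProductSpace ℝ Y] [FiniteDimensional ℝ Y]
  (a : X →ₗ[ℝ] X →ₗ[ℝ] ℝ) (b : X →ₗ[ℝ] Y →ₗ[ℝ] ℝ)
  (ha_symm : ∀ w v : X, a w v = a v w)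
  (αa γa : ℝ) (hαa : 0 < αa) (hγa : 0 < γa)
  (ha_coer : ∀ v : X, αa * ‖v‖ ^ 2 ≤ a v v)
  (ha_cont : ∀ w v : X, a w v ≤ γa * ‖w‖ * ‖v‖)
  (βt : ℝ) (hβt : 0 < βt)
  (hinfsup_a : ∀ q : Y, βt * ‖q‖ ≤ ⨆ v : {v : X // v ≠ 0}, b v.1 q / Real.sqrt (a v.1 v.1))
  (f : X →ₗ[ℝ] ℝ) (g : Y →ₗ[ℝ] ℝ)
  (u : X) (p : Y)
  (htruth1 : ∀ v : X, a u v + b v p = f v)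
  (htruth2 : ∀ q : Y, b u q = g q)
  (XN : Submodule ℝ X) (YN : Submodule ℝ Y)
  (uN : X) (pN : Y) (huN : uN ∈ XN) (hpN : pN ∈ YN)
  (hrb1 : ∀ v ∈ XN, a uN v + b v pN = f v)
  (hrb2 : ∀ q ∈ YN, b uN q = g q)
:
    ‖p - pN‖ ≤ (2 / βt) * (⨆ v : {v : X // v ≠ 0}, (f v.1 - a uN v.1 - b v.1 pN) / Real.sqrt (a v.1 v.1)) + (1 / βt ^ 2) * (⨆ q : {q : Y // q ≠ 0}, (g q.1 - b uN q.1) / ‖q.1‖) := by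
  -- basic facts about the energy form
  have ha_nonneg : ∀ v : X, 0 ≤ a v v := fun v => le_trans (by positivity) (ha_coer v)
  have hden : ∀ v : X, Real.sqrt αa * ‖v‖ ≤ Real.sqrt (a v v) := by
    intro v
    rw [← Real.sqrt_sq (norm_nonneg v), ← Real.sqrt_mul hαa.le]
    exact Real.sqrt_le_sqrt (ha_coer v)
  have hsqrt_pos : ∀ v : X, v ≠ 0 → 0 < Real.sqrt (a v v) := fun v hv =>
    lt_of_lt_of_le (mul_pos (Real.sqrt_pos.mpr hαa) (norm_pos_iff.mpr hv)) (hden v)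
  -- the residual functionals
  set r1 : X →ₗ[ℝ] ℝ := f - a uN - b.flip pN with hr1def
  set r2 : Y →ₗ[ℝ] ℝ := g - b uN with hr2def
  have hr1app : ∀ v : X, r1 v = f v - a uN v - b v pN := by
    intro v; simp [hr1def, LinearMap.sub_apply, LinearMap.flip_apply]
  have hr2app : ∀ q : Y, r2 q = g q - b uN q := by
    intro q; simp [hr2def, LinearMap.sub_apply]
  -- boundedness of the two sup families
  set C1 : ℝ := ‖LinearMap.toContinuousLinearMap r1‖ with hC1def
  have hC1 : 0 ≤ C1 := norm_nonneg _
  have hC1b : ∀ v : X, r1 v ≤ C1 * ‖v‖ := by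
    intro v
    have := (LinearMap.toContinuousLinearMap r1).le_opNorm v
    rw [LinearMap.coe_toContinuousLinearMap'] at this
    calc r1 v ≤ ‖r1 v‖ := le_abs_self _
      _ ≤ C1 * ‖v‖ := this
  have hbdd1 : BddAbove (Set.range fun v : {v : X // v ≠ 0} =>
      (f v.1 - a uN v.1 - b v.1 pN) / Real.sqrt (a v.1 v.1)) := by
    refine ⟨C1 / Real.sqrt αa, ?_⟩
    rintro x ⟨⟨v, hv⟩, rfl⟩
    show (f v - a uN v - b v pN) / Real.sqrt (a v v) ≤ C1 / Real.sqrt αa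
    rw [← hr1app]
    have hvpos : 0 < ‖v‖ := norm_pos_iff.mpr hv
    have hd0 : 0 < Real.sqrt αa * ‖v‖ := mul_pos (Real.sqrt_pos.mpr hαa) hvpos
    rcases le_or_gt (r1 v) 0 with h | h
    · exact le_trans (div_nonpos_of_nonpos_of_nonneg h (hsqrt_pos v hv).le)
        (div_nonneg hC1 (Real.sqrt_nonneg _))
    · calc r1 v / Real.sqrt (a v v) ≤ (C1 * ‖v‖) / (Real.sqrt αa * ‖v‖) :=
            div_le_div₀ (by positivity) (hC1b v) hd0 (hden v)
        _ = C1 / Real.sqrt αa := mul_div_mul_right _ _ (ne_of_gt hvpos)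
  set C2 : ℝ := ‖LinearMap.toContinuousLinearMap r2‖ with hC2def
  have hbdd2 : BddAbove (Set.range fun q : {q : Y // q ≠ 0} =>
      (g q.1 - b uN q.1) / ‖q.1‖) := by
    refine ⟨C2, ?_⟩
    rintro x ⟨⟨q, hq⟩, rfl⟩
    show (g q - b uN q) / ‖q‖ ≤ C2
    rw [← hr2app]
    have hqpos : 0 < ‖q‖ := norm_pos_iff.mpr hq
    rw [div_le_iff₀ hqpos]
    have := (LinearMap.toContinuousLinearMap r2).le_opNorm q
    rw [LinearMap.coe_toContinuousLinearMap'] at this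
    exact le_trans (le_abs_self _) this
  -- the two sups and their nonnegativity
  set R1 : ℝ := ⨆ v : {v : X // v ≠ 0},
      (f v.1 - a uN v.1 - b v.1 pN) / Real.sqrt (a v.1 v.1) with hR1def
  set R2 : ℝ := ⨆ q : {q : Y // q ≠ 0}, (g q.1 - b uN q.1) / ‖q.1‖ with hR2def
  have hR1 : 0 ≤ R1 := by
    refine supNonneg15 (fun v => f v - a uN v - b v pN) (fun v => Real.sqrt (a v v))
      ?_ ?_ hbdd1
    · intro v; simp only [map_neg, LinearMap.neg_apply]; ring
    · intro v; simp only [map_neg, LinearMap.neg_apply, neg_neg]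
  have hR2 : 0 ≤ R2 := by
    refine supNonneg15 (fun q => g q - b uN q) (fun q => ‖q‖) ?_ (fun q => norm_neg q) hbdd2
    intro q; simp only [map_neg]; ring
  rcases subsingleton_or_nontrivial Y with hY | hY
  · have hp0 : p - pN = 0 := Subsingleton.elim _ _
    rw [hp0, norm_zero]
    have h1 : (0:ℝ) ≤ 2 / βt := by positivity
    have h2 : (0:ℝ) ≤ 1 / βt ^ 2 := by positivity
    exact add_nonneg (mul_nonneg h1 hR1) (mul_nonneg h2 hR2)
  -- The energy inner product space
  letI core : InnerProductSpace.Core ℝ (ESyn15 X) := {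
    inner := fun x y => a (toE15.symm x) (toE15.symm y)
    conj_inner_symm := fun x y => by simpa using ha_symm _ _
    re_inner_nonneg := fun x => by simpa using ha_nonneg (toE15.symm x)
    definite := fun x hx => by
      have hx' : a (toE15.symm x) (toE15.symm x) = 0 := hx
      have h := ha_coer (toE15.symm x)
      rw [hx'] at h
      have hn : ‖(toE15.symm x : X)‖ = 0 := by
        by_contra hne
        have hp : 0 < ‖(toE15.symm x : X)‖ := lt_of_le_of_ne (norm_nonneg _) (Ne.symm hne)
        nlinarith [mul_pos hαa (pow_pos hp 2)]
      have h0 : (toE15.symm x : X) = 0 := norm_eq_zero.mp hn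
      have := congrArg (toE15 (X := X)) h0
      simpa using this
    add_left := fun x y z => by simp
    smul_left := fun x y r => by simp }
  letI : NormedAddCommGroup (ESyn15 X) := core.toNormedAddCommGroup
  letI : InnerProductSpace ℝ (ESyn15 X) := InnerProductSpace.ofCore core.toCore
  haveI : FiniteDimensional ℝ (ESyn15 X) := Module.Finite.equiv (toE15 (X := X))
  set ι := (toE15 : X ≃ₗ[ℝ] ESyn15 X) with hι
  have hinner : ∀ x y : X, (inner ℝ (ι x) (ι y) : ℝ) = a x y := fun x y => rfl
  have hnorm : ∀ x : X, ‖ι x‖ = Real.sqrt (a x x) := fun x => by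
    rw [norm_eq_sqrt_real_inner, hinner]
  -- the Riesz representatives of b (·, q)
  let B : ESyn15 X →ₗ[ℝ] Y →ₗ[ℝ] ℝ := b.comp ι.symm.toLinearMap
  let K : Submodule ℝ (ESyn15 X) := LinearMap.ker B
  let zfun : Y → ESyn15 X := fun q =>
    (InnerProductSpace.toDual ℝ (ESyn15 X)).symm (LinearMap.toContinuousLinearMap (B.flip q))
  have hz : ∀ (q : Y) (v : ESyn15 X), (inner ℝ (zfun q) v : ℝ) = b (ι.symm v) q := by
    intro q v
    rw [show (inner ℝ (zfun q) v : ℝ) = _ from InnerProductSpace.toDual_symm_apply]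
    simp [B]
  have hz' : ∀ (q : Y) (v : X), (inner ℝ (zfun q) (ι v) : ℝ) = b v q := by
    intro q v
    rw [hz]
    simp
  let zl : Y →ₗ[ℝ] ESyn15 X :=
    { toFun := zfun
      map_add' := by intro q q'; simp [zfun, map_add]
      map_smul' := by intro r q; simp [zfun, map_smul] }
  have hKZ : K = (LinearMap.range zl)ᗮ := by
    ext v
    simp only [K, LinearMap.mem_ker, Submodule.mem_orthogonal, LinearMap.mem_range]
    constructor
    · rintro h u ⟨q, rfl⟩
      rw [show (zl q : ESyn15 X) = zfun q from rfl, hz]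
      exact DFunLike.congr_fun h q
    · intro h
      ext q
      have := h (zfun q) ⟨q, rfl⟩
      rw [hz] at this
      exact this
  -- decomposition of the energy error
  set e : ESyn15 X := ι (u - uN) with hedef
  set e0 : ESyn15 X := (K.orthogonalProjectionOnto e : ESyn15 X) with he0def
  set w : ESyn15 X := e - e0 with hwdef
  have hwK : w ∈ Kᗮ := Submodule.sub_starProjection_mem_orthogonal (K := K) e
  have he0K : e0 ∈ K := SetLike.coe_mem _
  have he : e = e0 + w := by rw [hwdef]; abel
  have hwe0 : (inner ℝ w e0 : ℝ) = 0 := by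
    rw [real_inner_comm]
    exact (Submodule.mem_orthogonal K w).mp hwK e0 he0K
  have hbK : ∀ v ∈ K, ∀ q : Y, b (ι.symm v) q = 0 := by
    intro v hv q
    exact DFunLike.congr_fun (LinearMap.mem_ker.mp hv) q
  -- residual identities
  have hres1 : ∀ v : X, f v - a uN v - b v pN = (inner ℝ (e + zfun (p - pN)) (ι v) : ℝ) := by
    intro v
    rw [inner_add_left, hedef, hinner, hz']
    have h1 : a (u - uN) v = a u v - a uN v := by
      rw [map_sub, LinearMap.sub_apply]
    have h2 : b v (p - pN) = b v p - b v pN := map_sub _ _ _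
    have := htruth1 v
    rw [h1, h2]; linarith
  have hres2 : ∀ q : Y, g q - b uN q = (inner ℝ (zfun q) e : ℝ) := by
    intro q
    rw [hedef, hz]
    have : (ι.symm (ι (u - uN)) : X) = u - uN := ι.symm_apply_apply _
    rw [this, map_sub, LinearMap.sub_apply]
    have := htruth2 q
    linarith
  set ρ : ESyn15 X := e + zfun (p - pN) with hρdef
  -- Step A : the kernel component is controlled by R1
  have hA : ‖e0‖ ≤ R1 := by
    have hρe0 : (inner ℝ ρ e0 : ℝ) = ‖e0‖ ^ 2 := by
      rw [hρdef, inner_add_left]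
      have h1 : (inner ℝ (zfun (p - pN)) e0 : ℝ) = 0 := by
        rw [hz]
        exact hbK e0 he0K (p - pN)
      have h2 : (inner ℝ e e0 : ℝ) = ‖e0‖ ^ 2 := by
        rw [he, inner_add_left, real_inner_self_eq_norm_sq, hwe0]
        ring
      rw [h1, h2]; ring
    by_cases he00 : e0 = 0
    · rw [he00, norm_zero]; exact hR1
    · have hv0 : (ι.symm e0 : X) ≠ 0 := by
        intro h
        apply he00
        have := congrArg (ι : X ≃ₗ[ℝ] ESyn15 X) h
        simpa using this
      have hle := le_ciSup hbdd1 ⟨ι.symm e0, hv0⟩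
      simp only at hle
      rw [hres1, ι.apply_symm_apply, hρe0, ← hnorm, ι.apply_symm_apply] at hle
      rwa [sq, mul_div_assoc, div_self (norm_ne_zero_iff.mpr he00), mul_one] at hle
  -- Step B : the orthogonal component is controlled by R2 / βt
  have hB : ‖w‖ ≤ R2 / βt := by
    have hwZ : w ∈ LinearMap.range zl := by
      rw [← Submodule.orthogonal_orthogonal (LinearMap.range zl), ← hKZ]
      exact hwK
    obtain ⟨q0, hq0⟩ := hwZ
    by_cases hw0 : w = 0
    · rw [hw0, norm_zero]; exact div_nonneg hR2 hβt.le
    · have hq0ne : q0 ≠ 0 := by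
        rintro rfl
        rw [map_zero] at hq0
        exact hw0 hq0.symm
      have hzq0 : zfun q0 = w := hq0
      have h1 : ‖w‖ ^ 2 = g q0 - b uN q0 := by
        rw [hres2 q0, hzq0, he, inner_add_right, hwe0, real_inner_self_eq_norm_sq]
        ring
      have h2 : (g q0 - b uN q0) / ‖q0‖ ≤ R2 := by
        have := le_ciSup hbdd2 ⟨q0, hq0ne⟩
        simpa using this
      have h3 : βt * ‖q0‖ ≤ ‖w‖ := by
        refine le_trans (hinfsup_a q0) (Real.iSup_le ?_ (norm_nonneg w))
        rintro ⟨v, hv⟩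
        simp only
        rw [← hnorm v, ← hz' q0 v, hzq0, div_le_iff₀ (by rw [hnorm]; exact hsqrt_pos v hv)]
        exact real_inner_le_norm w (ι v)
      have hq0pos : 0 < ‖q0‖ := norm_pos_iff.mpr hq0ne
      have hwpos : 0 < ‖w‖ := norm_pos_iff.mpr hw0
      have h4 : ‖w‖ ^ 2 ≤ R2 * ‖q0‖ := by
        rw [h1]; exact (div_le_iff₀ hq0pos).mp h2
      rw [le_div_iff₀ hβt]
      nlinarith [mul_le_mul_of_nonneg_left h3 hR2]
  -- Step C : the inf-sup bound on the pressure error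
  have hC : βt * ‖p - pN‖ ≤ R1 + (‖e0‖ + ‖w‖) := by
    refine le_trans (hinfsup_a (p - pN)) (Real.iSup_le ?_
      (add_nonneg hR1 (add_nonneg (norm_nonneg _) (norm_nonneg _))))
    rintro ⟨v, hv⟩
    simp only
    have hvn : 0 < ‖ι v‖ := by rw [hnorm]; exact hsqrt_pos v hv
    have hsplit : b v (p - pN) = (inner ℝ ρ (ι v) : ℝ) + (inner ℝ (-e) (ι v) : ℝ) := by
      rw [inner_neg_left, hρdef, inner_add_left, hedef, hinner, hz']
      have h1 : a (u - uN) v = a u v - a uN v := by rw [map_sub, LinearMap.sub_apply]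
      rw [h1]; ring
    have hterm1 : (inner ℝ ρ (ι v) : ℝ) / ‖ι v‖ ≤ R1 := by
      have hle := le_ciSup hbdd1 ⟨v, hv⟩
      simp only at hle
      rwa [hres1 v, ← hnorm v] at hle
    have hterm2 : (inner ℝ (-e) (ι v) : ℝ) / ‖ι v‖ ≤ ‖e0‖ + ‖w‖ := by
      rw [div_le_iff₀ hvn]
      calc (inner ℝ (-e) (ι v) : ℝ) ≤ ‖-e‖ * ‖ι v‖ := real_inner_le_norm _ _
        _ = ‖e0 + w‖ * ‖ι v‖ := by rw [norm_neg, he]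
        _ ≤ (‖e0‖ + ‖w‖) * ‖ι v‖ :=
            mul_le_mul_of_nonneg_right (norm_add_le _ _) (norm_nonneg _)
    rw [← hnorm v]
    calc b v (p - pN) / ‖ι v‖
        = (inner ℝ ρ (ι v) : ℝ) / ‖ι v‖ + (inner ℝ (-e) (ι v) : ℝ) / ‖ι v‖ := by
          rw [hsplit, add_div]
      _ ≤ R1 + (‖e0‖ + ‖w‖) := add_le_add hterm1 hterm2
  -- conclusion
  have hfinal : βt * ‖p - pN‖ ≤ 2 * R1 + R2 / βt := by linarith
  have : ‖p - pN‖ ≤ (2 * R1 + R2 / βt) / βt := by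
    rw [le_div_iff₀ hβt]; linarith
  calc ‖p - pN‖ ≤ (2 * R1 + R2 / βt) / βt := this
    _ = (2 / βt) * R1 + (1 / βt ^ 2) * R2 := by field_simp
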